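/- Let m be even, N = nm+2, and let {i,j} be a diagonal with |i−j| even (equivalently both endpoints of the same parity, not central). Then the τᵐ-orbit of {i,j} has cardinality N/2. -/

import Mathlib

open Sym2

/-- A diagonal of the regular `N`-gon: an unordered pair of distinct, non-adjacent vertices. -/
def IsDiag (N : ℕ) (d : Sym2 (ZMod N)) : Prop :=
  ∃ a b : ZMod N, d = s(a, b) ∧ a ≠ b ∧ a ≠ b + 1 ∧ b ≠ a + 1

/-- The translation τ on diagonals: subtract 1 from both endpoints. -/
def tauD (N : ℕ) (d : Sym2 (ZMod N)) : Sym2 (ZMod N) :=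
  d.map (fun x => x - 1)

/-- The τ-orbit of a diagonal. -/
def tauOrbit (N : ℕ) (d : Sym2 (ZMod N)) : Set (Sym2 (ZMod N)) :=
  {e | ∃ k : ℤ, e = d.map (fun x => x - (k : ZMod N))}

/-- The τ^m-orbit of a diagonal. -/
def taumOrbit (N m : ℕ) (d : Sym2 (ZMod N)) : Set (Sym2 (ZMod N)) :=
  {e | ∃ k : ℤ, e = d.map (fun x => x - (k : ZMod N) * (m : ZMod N))}

/-- Arrows of the translation quiver Γ of diagonals of the N-gon. -/
def GammaArrow (N : ℕ) (d d' : Sym2 (ZMod N)) : Prop :=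
  IsDiag N d ∧ IsDiag N d' ∧
    ∃ a b : ZMod N, d = s(a, b) ∧ (d' = s(a, b + 1) ∨ d' = s(a + 1, b))

/-- A sectional path of length m in Γ. -/
def SectionalPath (N m : ℕ) (p : ℕ → Sym2 (ZMod N)) : Prop :=
  (∀ t < m, GammaArrow N (p t) (p (t + 1))) ∧
    ∀ t, 1 ≤ t → t < m → tauD N (p (t + 1)) ≠ p (t - 1)

/-- Arrows of the m-th power quiver (Γ)^m: sectional paths of length m. -/
def PowArrow (N m : ℕ) (d d' : Sym2 (ZMod N)) : Prop :=
  ∃ p : ℕ → Sym2 (ZMod N), SectionalPath N m p ∧ p 0 = d ∧ p m = d'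

/-- Two vertices lie in the same connected component of (Γ)^m. -/
def SameComponent (N m : ℕ) (d d' : Sym2 (ZMod N)) : Prop :=
  Relation.ReflTransGen (fun a b => PowArrow N m a b ∨ PowArrow N m b a) d d'

/-- The connected component of (Γ)^m containing a given diagonal. -/
def componentOf (N m : ℕ) (d : Sym2 (ZMod N)) : Set (Sym2 (ZMod N)) :=
  {e | SameComponent N m d e}

/-- The set of connected components of (Γ)^m. -/
def components (N m : ℕ) : Set (Set (Sym2 (ZMod N))) :=
  {S | ∃ d, IsDiag N d ∧ S = componentOf N m d}

/-- The action of τ⁻¹ on the translation quiver ℤA_n (vertices (p,i)):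
one horizontal unit to the right. -/
def tauInvZA (v : ℤ × ℤ) : ℤ × ℤ := (v.1 + 1, v.2)

/-- The action of the shift Σ on ℤA_n: Σ(p,i) = (p+i, n+1-i), a translation by
(n+1)/2 horizontal units composed with the vertical reflection i ↦ n+1-i. -/
def sigmaZA (n : ℕ) (v : ℤ × ℤ) : ℤ × ℤ := (v.1 + v.2, (n : ℤ) + 1 - v.2)

/-- `x` lies strictly between `a` and `b` in the clockwise cyclic order on ℤ/N. -/
def CycBtw (N : ℕ) (a x b : ZMod N) : Prop :=
  0 < (x - a).val ∧ (x - a).val < (b - a).val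

/-- The diagonals (a,b) and (c,d) cross: exactly one of c, d lies strictly
between a and b in the cyclic order. -/
def CrossD (N : ℕ) (a b c d : ZMod N) : Prop :=
  Xor' (CycBtw N a c b) (CycBtw N a d b)

/-- for m even and a non-central diagonal {i,j} with both
endpoints of the same parity, the τ^m-orbit of {i,j} has exactly N/2 elements. -/
lemma keyDvd (n m' : ℕ) (k : ℤ) :
    (((k * (m' + m') : ℤ)) : ZMod (n*(m'+m')+2)) = 0 ↔ ((n*m'+1 : ℕ) : ℤ) ∣ k := by
  rw [ZMod.intCast_zmod_eq_zero_iff_dvd]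
  have hcop : IsCoprime ((n*m'+1 : ℕ) : ℤ) ((m' : ℕ) : ℤ) := by
    rw [Int.isCoprime_iff_gcd_eq_one, Int.gcd_natCast_natCast]
    simpa [add_comm] using (Nat.coprime_add_mul_left_left 1 m' n).mpr (Nat.coprime_one_left m')
  constructor
  · intro hdv
    have h2 : ((n*m'+1 : ℕ) : ℤ) ∣ k * m' := by
      obtain ⟨c, hc⟩ := hdv
      refine ⟨c, ?_⟩
      push_cast at hc ⊢
      linarith
    exact hcop.dvd_of_dvd_mul_right h2
  · rintro ⟨c, rfl⟩
    refine ⟨c * m', ?_⟩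
    push_cast
    ring

theorem stmt_4 (n m : ℕ) (hn : 2 ≤ n) (hm : Even m) (hm1 : 1 ≤ m)
    (i j : ZMod (n * m + 2)) (hd : IsDiag (n * m + 2) s(i, j))
    (hpar : Even i.val ↔ Even j.val)
    (hnc : (j - i).val ≠ (n * m + 2) / 2) :
    (taumOrbit (n * m + 2) m s(i, j)).ncard = (n * m + 2) / 2 := by
  obtain ⟨m', rfl⟩ := hm
  -- i ≠ j
  have hij : i ≠ j := by
    obtain ⟨a, b, hab, hne, -, -⟩ := hd
    rw [Sym2.eq_iff] at hab
    rcases hab with ⟨rfl, rfl⟩ | ⟨rfl, rfl⟩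
    · exact hne
    · exact hne.symm
  -- the diagonal is not fixed by the half-turn
  have h2 : j - i ≠ i - j := by
    intro he
    have hne0 : j - i ≠ 0 := sub_ne_zero.mpr hij.symm
    have : -(j - i) = (j - i) := by rw [neg_sub]; exact he.symm
    rcases (ZMod.neg_eq_self_iff _).mp this with h0 | h0
    · exact hne0 h0
    · apply hnc; omega
  set M : ZMod (n * (m' + m') + 2) := ((m' + m' : ℕ) : ZMod (n * (m' + m') + 2)) with hM
  -- key reformulation
  have key2 : ∀ k1 k2 : ℤ,
      ((k1 : ZMod (n * (m' + m') + 2)) * M = (k2 : ZMod (n * (m' + m') + 2)) * M) ↔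
        ((n * m' + 1 : ℕ) : ℤ) ∣ (k1 - k2) := by
    intro k1 k2
    have hEEq : ((((k1 - k2) * (m' + m') : ℤ)) : ZMod (n * (m' + m') + 2))
        = ((k1 : ZMod (n * (m' + m') + 2)) - (k2 : ZMod (n * (m' + m') + 2))) * M := by
      push_cast [hM]; ring
    rw [← sub_eq_zero, ← sub_mul, ← hEEq, keyDvd]
  -- the parametrization
  set g : Fin (n * m' + 1) → Sym2 (ZMod (n * (m' + m') + 2)) :=
    fun k => s(i - ((k : ℕ) : ZMod (n * (m' + m') + 2)) * M,
               j - ((k : ℕ) : ZMod (n * (m' + m') + 2)) * M) with hg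
  have hcast : ∀ r : ℕ, ((r : ℕ) : ZMod (n * (m' + m') + 2))
      = (((r : ℕ) : ℤ) : ZMod (n * (m' + m') + 2)) := by intro r; push_cast; rfl
  have horb : taumOrbit (n * (m' + m') + 2) (m' + m') s(i, j) = Set.range g := by
    ext e
    constructor
    · rintro ⟨k, rfl⟩
      have hhpos : (0 : ℤ) < ((n * m' + 1 : ℕ) : ℤ) := by positivity
      set r := (k % ((n * m' + 1 : ℕ) : ℤ)).toNat with hr
      have hmod1 := Int.emod_lt_of_pos k hhpos
      have hmod2 := Int.emod_nonneg k (by omega : ((n * m' + 1 : ℕ) : ℤ) ≠ 0)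
      have hrlt : r < n * m' + 1 := by omega
      refine ⟨⟨r, hrlt⟩, ?_⟩
      have hreq : (r : ℤ) = k % ((n * m' + 1 : ℕ) : ℤ) := by omega
      have hdvd : ((n * m' + 1 : ℕ) : ℤ) ∣ (k - (r : ℤ)) := by
        rw [hreq]
        exact Int.dvd_self_sub_of_emod_eq rfl
      have heq : (k : ZMod (n * (m' + m') + 2)) * M
          = (((r : ℕ) : ℤ) : ZMod (n * (m' + m') + 2)) * M := (key2 k r).mpr hdvd
      simp only [hg, Sym2.map_pair_eq, hcast r, ← hM, heq]
    · rintro ⟨k, rfl⟩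
      refine ⟨((k : ℕ) : ℤ), ?_⟩
      simp only [hg, Sym2.map_pair_eq, hcast (k : ℕ), ← hM]
  rw [horb]
  have hginj : Function.Injective g := by
    intro k1 k2 hk
    simp only [hg, Sym2.eq_iff] at hk
    rcases hk with ⟨ha, hb⟩ | ⟨ha, hb⟩
    · have hmm : (((k1 : ℕ) : ℤ) : ZMod (n * (m' + m') + 2)) * M
          = (((k2 : ℕ) : ℤ) : ZMod (n * (m' + m') + 2)) * M := by
        rw [← hcast, ← hcast]
        linear_combination -ha
      have hdvd := (key2 _ _).mp hmm
      have h1 : |((k1 : ℕ) : ℤ) - ((k2 : ℕ) : ℤ)| < ((n * m' + 1 : ℕ) : ℤ) := by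
        have := k1.isLt; have := k2.isLt
        rw [abs_lt]; omega
      have := Int.eq_zero_of_abs_lt_dvd hdvd h1
      exact Fin.ext (by omega)
    · exfalso
      apply h2
      linear_combination hb - ha
  rw [← Nat.card_coe_set_eq, Nat.card_range_of_injective hginj, Nat.card_eq_fintype_card,
    Fintype.card_fin]
  have : n * (m' + m') = 2 * (n * m') := by ring
  omega
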